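/- Let M be a nontrivial cut of G with vertex set W, let H_1 and H_2 be the two connected components of G − M, and suppose the boundary T^M_2 is a 3-cutset of G. Let S be a 3-cutset dependent with T^M_2 such that S ∩ (H_2 ∪ W) = {x}, and suppose S separates some vertex y ∈ T^M_2 from the other vertices of T^M_2 (i.e., y ∉ S and every vertex of T^M_2 \ (S ∪ {y}) lies in a connected component of G − S different from the component of y). Then x and y are adjacent and the cut M can be complemented by the edge xy. -/

import Mathlib

namespace Paper

variable {V : Type*}

/-- `S ⊆ V(G)` is a cutset of `G`: the graph `G − S` is disconnected. -/
def IsCutset (G : SimpleGraph V) (S : Set V) : Prop :=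
  ¬ (G.induce (Sᶜ : Set V)).Connected

/-- A 3-cutset: a cutset of exactly 3 vertices. -/
def IsThreeCutset (G : SimpleGraph V) (S : Set V) : Prop :=
  S.ncard = 3 ∧ IsCutset G S

/-- `G` is triconnected: at least 4 vertices and deleting any at most 2 vertices
leaves a connected graph. -/
def IsTriconnected [Fintype V] (G : SimpleGraph V) : Prop :=
  4 ≤ Fintype.card V ∧
    ∀ X : Set V, X.ncard ≤ 2 → (G.induce (Xᶜ : Set V)).Connected

/-- `x` and `y` both survive the deletion of `R` and lie in the same connected
component of `G − R`. -/
def ReachOutside (G : SimpleGraph V) (R : Set V) (x y : V) : Prop :=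
  ∃ (hx : x ∈ (Rᶜ : Set V)) (hy : y ∈ (Rᶜ : Set V)),
    (G.induce (Rᶜ : Set V)).Reachable ⟨x, hx⟩ ⟨y, hy⟩

/-- `R` splits `X`: two vertices of `X \ R` lie in different connected components
of `G − R`. -/
def Splits (G : SimpleGraph V) (R X : Set V) : Prop :=
  ∃ x ∈ X, ∃ y ∈ X, x ∉ R ∧ y ∉ R ∧ ¬ ReachOutside G R x y

/-- Two 3-cutsets are dependent iff one splits the other. -/
def Dependent (G : SimpleGraph V) (S T : Set V) : Prop :=
  Splits G S T ∨ Splits G T S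

/-- The connected component of `G − R` containing `u` (empty if `u ∈ R`). -/
def compOutside (G : SimpleGraph V) (R : Set V) (u : V) : Set V :=
  {y | ReachOutside G R u y}

/-- `C` is a connected component of `G − R`. -/
def IsCompOutside (G : SimpleGraph V) (R : Set V) (C : Set V) : Prop :=
  ∃ u, u ∉ R ∧ C = compOutside G R u

/-- The graph obtained from `G` by deleting the vertices of `A` (with all incident
edges) and the edges of `E`. -/
def DelVE (G : SimpleGraph V) (A : Set V) (E : Set (Sym2 V)) : SimpleGraph (Aᶜ : Set V) :=
  (G.deleteEdges E).induce (Aᶜ : Set V)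

/-- The mixed set of vertices `A` and edges `E` disconnects `G`. -/
def CutVE (G : SimpleGraph V) (A : Set V) (E : Set (Sym2 V)) : Prop :=
  ¬ (DelVE G A E).Connected

/-- `x` and `y` survive the deletion and lie in the same connected component of
the graph obtained by deleting the vertices of `A` and the edges of `E`. -/
def ReachVE (G : SimpleGraph V) (A : Set V) (E : Set (Sym2 V)) (x y : V) : Prop :=
  ∃ (hx : x ∈ (Aᶜ : Set V)) (hy : y ∈ (Aᶜ : Set V)),
    (DelVE G A E).Reachable ⟨x, hx⟩ ⟨y, hy⟩

/-- The connected component of `G − (A ∪ E)` containing `u`. -/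
def compVE (G : SimpleGraph V) (A : Set V) (E : Set (Sym2 V)) (u : V) : Set V :=
  {y | ReachVE G A E u y}

/-- `C` is a connected component of the graph obtained from `G` by deleting the
vertices of `A` and the edges of `E`. -/
def IsCompVE (G : SimpleGraph V) (A : Set V) (E : Set (Sym2 V)) (C : Set V) : Prop :=
  ∃ u, u ∉ A ∧ C = compVE G A E u

section AuxLemmas

variable {α : Type*}

lemma walk_closed {H : SimpleGraph α} {C : Set α}
    (hC : ∀ u ∈ C, ∀ v, H.Adj u v → v ∈ C) {a b : α} (w : H.Walk a b) (ha : a ∈ C) : b ∈ C := by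
  induction w with
  | nil => exact ha
  | cons h p ih => exact ih (hC _ ha _ h)

lemma reach_closed {H : SimpleGraph α} {C : Set α}
    (hC : ∀ u ∈ C, ∀ v, H.Adj u v → v ∈ C) {a b : α} (h : H.Reachable a b) (ha : a ∈ C) :
    b ∈ C :=
  h.elim fun w => walk_closed hC w ha

end AuxLemmas
/-- Corollary `l30c1`: under the given hypotheses the cut `M = (A, E)` can be
complemented by the edge `xy`. -/
theorem stmt_13 [Fintype V] (G : SimpleGraph V)
    (htri : IsTriconnected G) (hbig : 6 < Fintype.card V)
    (A : Set V) (E : Set (Sym2 V))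
    (hcard : A.ncard + E.ncard = 3) (hEsub : E ⊆ G.edgeSet)
    (hEne : E.Nonempty) (hcut : CutVE G A E)
    (H₁ H₂ : Set V) (hH₁ : IsCompVE G A E H₁) (hH₂ : IsCompVE G A E H₂)
    (hHne : H₁ ≠ H₂) (hcover : ∀ v, v ∉ A → v ∈ H₁ ∪ H₂)
    (hnt₁ : ∀ v : V, H₁ ≠ {v}) (hnt₂ : ∀ v : V, H₂ ≠ {v})
    (W T₂ : Set V)
    (hW : W = A ∪ {v | ∃ e ∈ E, v ∈ e})
    (hT₂ : T₂ = A ∪ {v ∈ H₂ | ∃ e ∈ E, v ∈ e})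
    (hT₂cut : IsThreeCutset G T₂)
    (S : Set V) (hS : IsThreeCutset G S) (hdep : Dependent G S T₂)
    (x : V) (hx : S ∩ (H₂ ∪ W) = {x})
    (y : V) (hy : y ∈ T₂) (hyS : y ∉ S)
    (hsep : ∀ z ∈ T₂, z ∉ S → z ≠ y → ¬ ReachOutside G S y z) :
    G.Adj x y ∧
      ((x ∈ A ∧ CutVE G (A \ {x}) (insert s(x, y) E)) ∨
        (y ∈ A ∧ CutVE G (A \ {y}) (insert s(x, y) E))) := by
  classical
  obtain ⟨-, hconn⟩ := htri
  -- ===== basic facts =====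
  have hxS : x ∈ S := by
    have h1 : x ∈ S ∩ (H₂ ∪ W) := by rw [hx]; exact rfl
    exact h1.1
  have hyx : y ≠ x := fun h => hyS (h ▸ hxS)
  have hAW : A ⊆ W := by rw [hW]; exact Set.subset_union_left
  have hT₂W : T₂ ⊆ W := by
    rw [hT₂, hW]
    rintro v (hv | ⟨hvH, hve⟩)
    · exact Or.inl hv
    · exact Or.inr hve
  have hAT₂ : A ⊆ T₂ := by rw [hT₂]; exact Set.subset_union_left
  have hsx : ∀ s ∈ S, s ≠ x → s ∉ H₂ ∧ s ∉ W := by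
    intro s hs hsxne
    constructor <;> intro h
    · have h2 : s ∈ S ∩ (H₂ ∪ W) := ⟨hs, Or.inl h⟩
      rw [hx] at h2; exact hsxne h2
    · have h2 : s ∈ S ∩ (H₂ ∪ W) := ⟨hs, Or.inr h⟩
      rw [hx] at h2; exact hsxne h2
  have hSH₂ : ∀ s ∈ S, s ∈ H₂ → s = x := by
    intro s hs hsH; by_contra h; exact (hsx s hs h).1 hsH
  have hSW : ∀ s ∈ S, s ∈ W → s = x := by
    intro s hs hsW; by_contra h; exact (hsx s hs h).2 hsW
  -- ===== H₂ as a component =====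
  obtain ⟨u₂, hu₂A, hH₂e⟩ := hH₂
  have hmem2 : ∀ v, v ∈ H₂ ↔ ReachVE G A E u₂ v := by
    intro v; rw [hH₂e]; exact Iff.rfl
  have hH₂A : ∀ v ∈ H₂, v ∉ A := by
    intro v hv
    obtain ⟨_, hv', _⟩ := (hmem2 v).mp hv
    simpa using hv'
  have delveAdj : ∀ (A' : Set V) (E' : Set (Sym2 V)) (p q : V) (hp : p ∈ (A'ᶜ : Set V))
      (hq : q ∈ (A'ᶜ : Set V)),
      (DelVE G A' E').Adj ⟨p, hp⟩ ⟨q, hq⟩ ↔ (G.Adj p q ∧ s(p, q) ∉ E') := by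
    intro A' E' p q hp hq
    constructor
    · intro h
      exact SimpleGraph.deleteEdges_adj.mp (SimpleGraph.comap_adj.mp h)
    · intro h
      exact SimpleGraph.comap_adj.mpr (SimpleGraph.deleteEdges_adj.mpr h)
  have hu₂H₂ : u₂ ∈ H₂ :=
    (hmem2 u₂).mpr ⟨by simpa using hu₂A, by simpa using hu₂A, SimpleGraph.Reachable.refl _⟩
  obtain ⟨b₂, hb₂H₂, hb₂u₂⟩ : ∃ b ∈ H₂, b ≠ u₂ := by
    by_contra h
    push_neg at h
    exact hnt₂ u₂ (Set.eq_singleton_iff_unique_mem.mpr ⟨hu₂H₂, h⟩)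
  have hF1 : ∀ u ∈ H₂, ∀ v, G.Adj u v → v ∉ A → s(u, v) ∉ E → v ∈ H₂ := by
    intro u hu v hadj hvA he
    obtain ⟨h2, hu', r⟩ := (hmem2 u).mp hu
    have hv' : v ∈ (Aᶜ : Set V) := by simpa using hvA
    refine (hmem2 v).mpr ⟨h2, hv', r.trans (SimpleGraph.Adj.reachable ?_)⟩
    exact (delveAdj A E u v hu' hv').mpr ⟨hadj, he⟩
  have hT₂mem : ∀ u ∈ H₂, ∀ e ∈ E, u ∈ e → u ∈ T₂ := by
    intro u hu e he hue
    rw [hT₂]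
    exact Or.inr ⟨hu, e, he, hue⟩
  -- ===== the component of y in G − S =====
  set Cy := compOutside G S y with hCydef
  have hyCy : y ∈ Cy := ⟨by simpa using hyS, by simpa using hyS, SimpleGraph.Reachable.refl _⟩
  have hCyS : ∀ v ∈ Cy, v ∉ S := by
    intro v hv
    obtain ⟨_, hv', _⟩ := hv
    simpa using hv'
  have hCcl : ∀ u ∈ Cy, ∀ v, G.Adj u v → v ∉ S → v ∈ Cy := by
    intro u hu v hadj hvS
    obtain ⟨hy', hu', r⟩ := hu
    have hv' : v ∈ (Sᶜ : Set V) := by simpa using hvS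
    exact ⟨hy', hv', r.trans (SimpleGraph.Adj.reachable
      (SimpleGraph.comap_adj.mpr (by exact hadj : G.Adj ((⟨u, hu'⟩ : ↥(Sᶜ : Set V)) : V) v)))⟩
  have hsep' : ∀ z ∈ T₂, z ∉ S → z ≠ y → z ∉ Cy := by
    intro z hz hzS hzy hzC
    exact hsep z hz hzS hzy hzC
  -- ===== generic contradiction machine =====
  have hcc : ∀ (X Q : Set V), X.ncard ≤ 2 →
      (∀ u ∈ Q, ∀ v, G.Adj u v → v ∉ X → v ∈ Q) →
      ∀ u, u ∈ Q → u ∉ X → ∀ s, s ∉ Q → s ∉ X → False := by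
    intro X Q hX hcl u hu huX s hsQ hsX
    have hr := (hconn X hX).preconnected ⟨u, by simpa using huX⟩ ⟨s, by simpa using hsX⟩
    have hs : s ∈ Q := by
      refine reach_closed (C := {p : ↥(Xᶜ : Set V) | (p : V) ∈ Q}) ?_ hr hu
      rintro ⟨p, hp⟩ hpQ ⟨q, hq⟩ hadj
      exact hcl p hpQ q (SimpleGraph.comap_adj.mp hadj) (by simpa using hq)
    exact hsQ hs
  -- ===== minimum degree ≥ 3 =====
  have hdeg : ∀ v a b : V, (∀ w, G.Adj v w → w = a ∨ w = b) → False := by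
    intro v a b hN
    obtain ⟨s, hs⟩ : ∃ s : V, s ∉ ({a, b, v} : Set V) := by
      by_contra h
      push_neg at h
      have h1 : (Set.univ : Set V).ncard ≤ ({a, b, v} : Set V).ncard :=
        Set.ncard_le_ncard (fun z _ => h z) (Set.toFinite _)
      have h2 : ({a, b, v} : Set V).ncard ≤ 3 := by
        refine le_trans (Set.ncard_insert_le _ _) ?_
        have := Set.ncard_insert_le b ({v} : Set V)
        simpa [Set.ncard_singleton, Nat.lt_succ_iff] using this
      rw [Set.ncard_univ, Nat.card_eq_fintype_card] at h1
      omega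
    simp only [Set.mem_insert_iff, Set.mem_singleton_iff, not_or] at hs
    obtain ⟨hsa, hsb, hsv⟩ := hs
    refine hcc (({a, b} : Set V) \ {v}) {v} ?_ ?_ v rfl (by simp) s (by simpa using hsv) ?_
    · refine le_trans (Set.ncard_le_ncard Set.diff_subset (Set.toFinite _)) ?_
      have := Set.ncard_insert_le a ({b} : Set V)
      simpa [Set.ncard_singleton] using this
    · intro u hu w hadj hwX
      have huv : u = v := hu
      subst huv
      have hwab : w = a ∨ w = b := hN w hadj
      show w = u
      by_contra hwv
      refine hwX ⟨?_, by simpa using hwv⟩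
      simp only [Set.mem_insert_iff, Set.mem_singleton_iff]
      exact hwab
    · rintro ⟨h1, -⟩
      simp only [Set.mem_insert_iff, Set.mem_singleton_iff] at h1
      rcases h1 with h1 | h1
      · exact hsa h1
      · exact hsb h1
  -- ===== a vertex of S different from x =====
  obtain ⟨s₀, hs₀S, hs₀x⟩ : ∃ s ∈ S, s ≠ x := by
    obtain ⟨a, b, c, hab, hac, hbc, hSe⟩ := Set.ncard_eq_three.mp hS.1
    by_cases ha : a = x
    · exact ⟨b, by rw [hSe]; simp, by rw [← ha]; exact hab.symm⟩
    · exact ⟨a, by rw [hSe]; simp, ha⟩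
  have hs₀H₂ : s₀ ∉ H₂ := (hsx s₀ hs₀S hs₀x).1
  have hs₀W : s₀ ∉ W := (hsx s₀ hs₀S hs₀x).2
  -- ===== Step 1 : y ∈ H₂ is impossible =====
  have hyH₂False : y ∈ H₂ → False := by
    intro hyH₂
    -- no vertex of H₂ other than y lies in Cy
    have hP : ∀ u, u ∈ Cy → u ∈ H₂ → u ≠ y → False := by
      intro u huC huH huy
      have hXcard : ({x, y} : Set V).ncard ≤ 2 := by
        have := Set.ncard_insert_le x ({y} : Set V)
        simpa [Set.ncard_singleton] using this
      refine hcc {x, y} {v | v ∈ Cy ∧ v ∈ H₂ ∧ v ≠ y} hXcard ?_ u ⟨huC, huH, huy⟩ ?_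
        s₀ (fun h => hs₀H₂ h.2.1) ?_
      · rintro p ⟨hpC, hpH, hpy⟩ v hadj hvX
        simp only [Set.mem_insert_iff, Set.mem_singleton_iff, not_or] at hvX
        obtain ⟨hvx, hvy⟩ := hvX
        by_cases hvH : v ∈ H₂
        · have hvS : v ∉ S := fun h => hvx (hSH₂ v h hvH)
          exact ⟨hCcl p hpC v hadj hvS, hvH, hvy⟩
        by_cases hvA : v ∈ A
        · have hvS : v ∉ S := fun h => hvx (hSW v h (hAW hvA))
          exact absurd (hCcl p hpC v hadj hvS) (hsep' v (hAT₂ hvA) hvS hvy)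
        · have he : s(p, v) ∈ E := by
            by_contra he
            exact hvH (hF1 p hpH v hadj hvA he)
          have hpT : p ∈ T₂ := hT₂mem p hpH _ he (Sym2.mem_mk_left p v)
          exact absurd hpC (hsep' p hpT (hCyS p hpC) hpy)
      · simp only [Set.mem_insert_iff, Set.mem_singleton_iff, not_or]
        exact ⟨fun h => (hCyS u huC) (h ▸ hxS), huy⟩
      · simp only [Set.mem_insert_iff, Set.mem_singleton_iff, not_or]
        exact ⟨hs₀x, fun h => hs₀H₂ (h ▸ hyH₂)⟩
    by_cases hxH₂ : x ∈ H₂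
    · -- counting case : x ∈ H₂
      have hNyH : ∀ v, G.Adj y v → v = x ∨ (s(y, v) ∈ E ∧ v ∉ H₂ ∧ v ≠ y) := by
        intro v hadj
        by_cases hvx : v = x
        · exact Or.inl hvx
        right
        have hvy : v ≠ y := fun h => G.irrefl (h ▸ hadj)
        by_cases hvH : v ∈ H₂
        · exact absurd (hP v (hCcl y hyCy v hadj (fun h => hvx (hSH₂ v h hvH))) hvH hvy) id
        by_cases hvA : v ∈ A
        · have hvS : v ∉ S := fun h => hvx (hSW v h (hAW hvA))
          exact absurd (hCcl y hyCy v hadj hvS) (hsep' v (hAT₂ hvA) hvS hvy)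
        · have he : s(y, v) ∈ E := by
            by_contra he
            exact hvH (hF1 y hyH₂ v hadj hvA he)
          exact ⟨he, hvH, hvy⟩
      -- we can find two distinct non-x neighbors of y
      by_cases hD : ∃ v₁, (G.Adj y v₁ ∧ v₁ ≠ x) ∧ ∃ v₂, (G.Adj y v₂ ∧ v₂ ≠ x) ∧ v₁ ≠ v₂
      · obtain ⟨v₁, ⟨ha₁, hx₁⟩, v₂, ⟨ha₂, hx₂⟩, h12⟩ := hD
        obtain ⟨he₁, hH₁', hne₁⟩ : s(y, v₁) ∈ E ∧ v₁ ∉ H₂ ∧ v₁ ≠ y := by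
          rcases hNyH v₁ ha₁ with h | h
          · exact absurd h hx₁
          · exact h
        obtain ⟨he₂, hH₂', hne₂⟩ : s(y, v₂) ∈ E ∧ v₂ ∉ H₂ ∧ v₂ ≠ y := by
          rcases hNyH v₂ ha₂ with h | h
          · exact absurd h hx₂
          · exact h
        have hff : s(y, v₁) ≠ s(y, v₂) := by
          intro h
          rcases Sym2.eq_iff.mp h with ⟨-, h2⟩ | ⟨h1, h2⟩
          · exact h12 h2
          · exact hne₁ h2
        have hEfin : E.Finite := Set.toFinite _
        have hE2 : 2 ≤ E.ncard := by
          have := (Set.one_lt_ncard hEfin).mpr ⟨_, he₁, _, he₂, hff⟩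
          omega
        have hE23 : E.ncard = 2 ∨ E.ncard = 3 := by omega
        rcases hE23 with hE2' | hE3'
        · -- |E| = 2
          have hEeq : ({s(y, v₁), s(y, v₂)} : Set (Sym2 V)) = E := by
            refine Set.eq_of_subset_of_ncard_le ?_ ?_ hEfin
            · rintro e (rfl | rfl)
              · exact he₁
              · exact he₂
            · rw [hE2', Set.ncard_pair hff]
          have hT₂sub : T₂ ⊆ A ∪ {y} := by
            rw [hT₂]
            rintro z (hz | ⟨hzH, e, he, hze⟩)
            · exact Or.inl hz
            · right
              rw [← hEeq] at he
              rcases he with rfl | rfl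
              · rcases Sym2.mem_iff.mp hze with rfl | rfl
                · rfl
                · exact absurd hzH hH₁'
              · rcases Sym2.mem_iff.mp hze with rfl | rfl
                · rfl
                · exact absurd hzH hH₂'
          have hle : (3 : ℕ) ≤ 2 := by
            have h1 := hT₂cut.1
            calc (3 : ℕ) = T₂.ncard := h1.symm
              _ ≤ (A ∪ {y}).ncard := Set.ncard_le_ncard hT₂sub (Set.toFinite _)
              _ ≤ A.ncard + ({y} : Set V).ncard := Set.ncard_union_le _ _
              _ ≤ 2 := by rw [Set.ncard_singleton]; omega
          omega
        · -- |E| = 3, A = ∅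
          have hA0 : A = ∅ := by
            have hA00 : A.ncard = 0 := by omega
            exact (Set.ncard_eq_zero (Set.toFinite _)).mp hA00
          obtain ⟨e₃, he₃E, he₃1, he₃2⟩ : ∃ e ∈ E, e ≠ s(y, v₁) ∧ e ≠ s(y, v₂) := by
            by_contra h
            push_neg at h
            have hsub : E ⊆ ({s(y, v₁), s(y, v₂)} : Set (Sym2 V)) := by
              intro e heE
              by_cases h1 : e = s(y, v₁)
              · exact Or.inl h1
              · exact Or.inr (h e heE h1)
            have := Set.ncard_le_ncard hsub (Set.toFinite _)
            rw [Set.ncard_pair hff] at this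
            omega
          have hEeq : ({s(y, v₁), s(y, v₂), e₃} : Set (Sym2 V)) = E := by
            refine Set.eq_of_subset_of_ncard_le ?_ ?_ hEfin
            · rintro e (rfl | rfl | rfl)
              · exact he₁
              · exact he₂
              · exact he₃E
            · rw [hE3', (Set.ncard_eq_three).mpr ⟨_, _, _, hff, Ne.symm he₃1, Ne.symm he₃2, rfl⟩]
          -- T₂ vertices are y or endpoints of e₃ in H₂
          have hT₂y : ∀ z ∈ T₂, z = y ∨ (z ∈ e₃ ∧ z ∈ H₂) := by
            intro z hz
            rw [hT₂, hA0] at hz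
            rcases hz with hz | ⟨hzH, e, he, hze⟩
            · exact absurd hz (Set.notMem_empty z)
            · rw [← hEeq] at he
              rcases he with rfl | rfl | rfl
              · rcases Sym2.mem_iff.mp hze with rfl | rfl
                · exact Or.inl rfl
                · exact absurd hzH hH₁'
              · rcases Sym2.mem_iff.mp hze with rfl | rfl
                · exact Or.inl rfl
                · exact absurd hzH hH₂'
              · exact Or.inr ⟨hze, hzH⟩
          obtain ⟨z₁, z₂, hz₁T, hz₂T, hz₁y, hz₂y, hz₁₂⟩ :
              ∃ z₁ z₂, z₁ ∈ T₂ ∧ z₂ ∈ T₂ ∧ z₁ ≠ y ∧ z₂ ≠ y ∧ z₁ ≠ z₂ := by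
            obtain ⟨a, b, c, hab, hac, hbc, hTe⟩ := Set.ncard_eq_three.mp hT₂cut.1
            have hyabc : y = a ∨ y = b ∨ y = c := by
              have := hy
              rw [hTe] at this
              simpa using this
            rcases hyabc with rfl | rfl | rfl
            · exact ⟨b, c, by rw [hTe]; simp, by rw [hTe]; simp, hab.symm, hac.symm, hbc⟩
            · exact ⟨a, c, by rw [hTe]; simp, by rw [hTe]; simp, hab, hbc.symm, hac⟩
            · exact ⟨a, b, by rw [hTe]; simp, by rw [hTe]; simp, hac, hbc, hab⟩
          have hz₁ : z₁ ∈ e₃ ∧ z₁ ∈ H₂ := (hT₂y z₁ hz₁T).resolve_left hz₁y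
          have hz₂ : z₂ ∈ e₃ ∧ z₂ ∈ H₂ := (hT₂y z₂ hz₂T).resolve_left hz₂y
          have he₃H₂ : ∀ w, w ∈ e₃ → w ∈ H₂ := by
            obtain ⟨p, q, rfl⟩ : ∃ p q, e₃ = s(p, q) := by
              induction e₃ using Sym2.ind with | _ p q => exact ⟨p, q, rfl⟩
            have hpq : p ∈ H₂ ∧ q ∈ H₂ := by
              rcases Sym2.mem_iff.mp hz₁.1 with h1 | h1 <;>
                rcases Sym2.mem_iff.mp hz₂.1 with h2 | h2
              · exact absurd (h1.trans h2.symm) hz₁₂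
              · exact ⟨h1 ▸ hz₁.2, h2 ▸ hz₂.2⟩
              · exact ⟨h2 ▸ hz₂.2, h1 ▸ hz₁.2⟩
              · exact absurd (h1.trans h2.symm) hz₁₂
            intro w hw
            rcases Sym2.mem_iff.mp hw with rfl | rfl
            · exact hpq.1
            · exact hpq.2
          -- final contradiction with X = {y}
          refine hcc {y} {v | v ∈ H₂ ∧ v ≠ y} (by simp) ?_ z₁ ⟨hz₁.2, hz₁y⟩
            (by simpa using hz₁y) s₀ (fun h => hs₀H₂ h.1) (by
              simp only [Set.mem_singleton_iff]
              intro h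
              exact hs₀H₂ (by rw [h]; exact hyH₂))
          rintro p ⟨hpH, hpy⟩ v hadj hvX
          have hvy : v ≠ y := by simpa using hvX
          by_cases hvH : v ∈ H₂
          · exact ⟨hvH, hvy⟩
          have hvA : v ∉ A := by rw [hA0]; simp
          have he : s(p, v) ∈ E := by
            by_contra he
            exact hvH (hF1 p hpH v hadj hvA he)
          rw [← hEeq] at he
          rcases he with he | he | he
          · rcases Sym2.eq_iff.mp he with ⟨h1, -⟩ | ⟨h1, h2⟩
            · exact absurd h1 hpy
            · exact absurd (h1 ▸ hpH) hH₁'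
          · rcases Sym2.eq_iff.mp he with ⟨h1, -⟩ | ⟨h1, h2⟩
            · exact absurd h1 hpy
            · exact absurd (h1 ▸ hpH) hH₂'
          · exact absurd (he₃H₂ v (he ▸ Sym2.mem_mk_right p v)) hvH
      · -- y has at most one neighbor besides x : degree too small
        push_neg at hD
        by_cases hD1 : ∃ v₁, G.Adj y v₁ ∧ v₁ ≠ x
        · obtain ⟨v₀, hv₀⟩ := hD1
          refine hdeg y x v₀ ?_
          intro w hw
          by_cases hwx : w = x
          · exact Or.inl hwx
          · exact Or.inr ((hD v₀ hv₀ w ⟨hw, hwx⟩).symm)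
        · push_neg at hD1
          refine hdeg y x x ?_
          intro w hw
          exact Or.inl (hD1 w hw)
    · -- x ∉ H₂ : H₂ ⊆ Cy, so H₂ = {y}, contradiction
      have hSH₂' : ∀ s ∈ S, s ∉ H₂ := fun s hs h => hxH₂ ((hSH₂ s hs h) ▸ h)
      have hH₂Cy : ∀ u ∈ H₂, u ∈ Cy := by
        intro u hu
        obtain ⟨hyc, hy', ry⟩ := (hmem2 y).mp hyH₂
        obtain ⟨hu₀', hu', ru⟩ := (hmem2 u).mp hu
        have r : (DelVE G A E).Reachable ⟨y, hy'⟩ ⟨u, hu'⟩ := ry.symm.trans ru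
        have key := reach_closed
          (C := {p : ↥(Aᶜ : Set V) | (p : V) ∈ Cy ∧ (p : V) ∈ H₂}) ?_ r ⟨hyCy, hyH₂⟩
        · exact key.1
        · rintro ⟨p, hp⟩ ⟨hpC, hpH⟩ ⟨q, hq⟩ hadj
          obtain ⟨hGadj, hqE⟩ := (delveAdj A E p q hp hq).mp hadj
          have hqH : q ∈ H₂ := hF1 p hpH q hGadj (by simpa using hq) hqE
          exact ⟨hCcl p hpC q hGadj (fun hqS => hSH₂' q hqS hqH), hqH⟩
      have hall : ∀ u ∈ H₂, u = y := by
        intro u hu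
        by_contra h
        exact hP u (hH₂Cy u hu) hu h
      exact hb₂u₂ ((hall b₂ hb₂H₂).trans (hall u₂ hu₂H₂).symm)
  -- ===== y ∈ A =====
  have hyA : y ∈ A := by
    have h := hy
    rw [hT₂] at h
    rcases h with h | h
    · exact h
    · exact absurd h.1 (fun hh => hyH₂False hh)
  have hyH₂ : y ∉ H₂ := fun h => hH₂A y h hyA
  -- ===== Step 2 : Cy ∩ H₂ = ∅ =====
  have hP₂ : ∀ u, u ∈ Cy → u ∈ H₂ → False := by
    intro u huC huH
    have hXcard : ({x, y} : Set V).ncard ≤ 2 := by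
      have := Set.ncard_insert_le x ({y} : Set V)
      simpa [Set.ncard_singleton] using this
    refine hcc {x, y} {v | v ∈ Cy ∧ v ∈ H₂} hXcard ?_ u ⟨huC, huH⟩ ?_
      s₀ (fun h => hs₀H₂ h.2) ?_
    · rintro p ⟨hpC, hpH⟩ v hadj hvX
      simp only [Set.mem_insert_iff, Set.mem_singleton_iff, not_or] at hvX
      obtain ⟨hvx, hvy⟩ := hvX
      by_cases hvH : v ∈ H₂
      · have hvS : v ∉ S := fun h => hvx (hSH₂ v h hvH)
        exact ⟨hCcl p hpC v hadj hvS, hvH⟩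
      by_cases hvA : v ∈ A
      · have hvS : v ∉ S := fun h => hvx (hSW v h (hAW hvA))
        exact absurd (hCcl p hpC v hadj hvS) (hsep' v (hAT₂ hvA) hvS hvy)
      · have he : s(p, v) ∈ E := by
          by_contra he
          exact hvH (hF1 p hpH v hadj hvA he)
        have hpT : p ∈ T₂ := hT₂mem p hpH _ he (Sym2.mem_mk_left p v)
        have hpy : p ≠ y := fun h => hyH₂ (h ▸ hpH)
        exact absurd hpC (hsep' p hpT (hCyS p hpC) hpy)
    · simp only [Set.mem_insert_iff, Set.mem_singleton_iff, not_or]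
      exact ⟨fun h => (hCyS u huC) (h ▸ hxS), fun h => hyH₂ (h ▸ huH)⟩
    · simp only [Set.mem_insert_iff, Set.mem_singleton_iff, not_or]
      exact ⟨hs₀x, fun h => hs₀W (h ▸ hAW hyA)⟩
  have hNy : ∀ v, G.Adj y v → v ∈ H₂ → v = x := by
    intro v hadj hvH
    by_contra hvx
    exact hP₂ v (hCcl y hyCy v hadj (fun h => hvx (hSH₂ v h hvH))) hvH
  -- ===== Step 3 : x and y are adjacent =====
  have hXncard : (T₂ \ {y}).ncard ≤ 2 := by
    have h3 := hT₂cut.1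
    rw [Set.ncard_diff_singleton_of_mem hy, h3]
  have hXW : T₂ \ {y} ⊆ W := fun z hz => hT₂W hz.1
  have hT₂X : ∀ z ∈ T₂, z ∉ T₂ \ {y} → z = y := by
    intro z hz hzX
    by_contra h
    exact hzX ⟨hz, h⟩
  have hadjxy : G.Adj x y := by
    by_contra hno
    by_cases hQ : ∃ u ∈ H₂, u ∉ T₂ \ {y}
    · obtain ⟨u, huH, huX⟩ := hQ
      refine hcc (T₂ \ {y}) {v | v ∈ H₂ ∧ v ∉ T₂ \ {y}} hXncard ?_ u ⟨huH, huX⟩ huX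
        s₀ (fun h => hs₀H₂ h.1) (fun h => hs₀W (hXW h))
      rintro p ⟨hpH, hpX⟩ v hadj hvX
      by_cases hvH : v ∈ H₂
      · exact ⟨hvH, hvX⟩
      by_cases hvA : v ∈ A
      · have hvy : v = y := hT₂X v (hAT₂ hvA) hvX
        have hpx : p = x := hNy p (hvy ▸ hadj).symm hpH
        exact absurd (hpx ▸ hvy ▸ hadj) hno
      · have he : s(p, v) ∈ E := by
          by_contra he
          exact hvH (hF1 p hpH v hadj hvA he)
        have hpT : p ∈ T₂ := hT₂mem p hpH _ he (Sym2.mem_mk_left p v)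
        have hpy : p = y := hT₂X p hpT hpX
        exact absurd (hpy ▸ hpH) hyH₂
    · -- degenerate : H₂ ⊆ T₂ \ {y}
      push_neg at hQ
      have hsub : H₂ ⊆ T₂ \ {y} := hQ
      have hXeq : ({u₂, b₂} : Set V) = T₂ \ {y} := by
        refine Set.eq_of_subset_of_ncard_le ?_ ?_ (Set.toFinite _)
        · rintro z (rfl | rfl)
          · exact hsub hu₂H₂
          · exact hsub hb₂H₂
        · rw [Set.ncard_pair (Ne.symm hb₂u₂)]
          exact hXncard
      have hH₂eq2 : H₂ = {u₂, b₂} := by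
        refine Set.Subset.antisymm (fun z hz => ?_) (by rintro z (rfl | rfl) <;> assumption)
        rw [hXeq]
        exact hsub hz
      have hAy : ∀ a ∈ A, a = y := by
        intro a ha
        refine hT₂X a (hAT₂ ha) ?_
        intro haX
        rw [← hXeq] at haX
        simp only [Set.mem_insert_iff, Set.mem_singleton_iff] at haX
        rcases haX with h | h
        · exact hH₂A a (by rw [h]; exact hu₂H₂) ha
        · exact hH₂A a (by rw [h]; exact hb₂H₂) ha
      have hAcard : A.ncard = 1 := by
        have hAeq : A = {y} := Set.Subset.antisymm (fun a ha => hAy a ha) (by simp [hyA])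
        rw [hAeq, Set.ncard_singleton]
      have hE2 : E.ncard = 2 := by omega
      obtain ⟨t₁, t₂, h12, hH₂t, ht₂x⟩ :
          ∃ t₁ t₂ : V, t₁ ≠ t₂ ∧ H₂ = {t₁, t₂} ∧ t₂ ≠ x := by
        by_cases hxu : x = u₂
        · exact ⟨u₂, b₂, hb₂u₂.symm, hH₂eq2,
            fun h => hb₂u₂ (h.trans hxu)⟩
        · exact ⟨b₂, u₂, hb₂u₂, by rw [hH₂eq2]; exact Set.pair_comm u₂ b₂,
            fun h => hxu h.symm⟩
      have ht₁H : t₁ ∈ H₂ := by rw [hH₂t]; simp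
      have ht₂H : t₂ ∈ H₂ := by rw [hH₂t]; simp
      obtain ⟨es, hesE, ht₁es⟩ : ∃ e ∈ E, t₁ ∈ e := by
        have h := (hsub ht₁H).1
        rw [hT₂] at h
        rcases h with h | ⟨-, e, he, hmem⟩
        · exact absurd ((hAy t₁ h) ▸ ht₁H) hyH₂
        · exact ⟨e, he, hmem⟩
      obtain ⟨e₁, e₂, he12, hEeq⟩ := Set.ncard_eq_two.mp hE2
      have hNt₂ : ∀ v, G.Adj t₂ v → v = t₁ ∨ (s(t₂, v) ∈ E ∧ v ∉ H₂) := by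
        intro v hadj
        by_cases hvH : v ∈ H₂
        · rw [hH₂t] at hvH
          rcases hvH with rfl | rfl
          · exact Or.inl rfl
          · exact absurd hadj (G.irrefl)
        by_cases hvA : v ∈ A
        · have hvy : v = y := hAy v hvA
          exact absurd (hNy t₂ (hvy ▸ hadj).symm ht₂H) ht₂x
        · refine Or.inr ⟨?_, hvH⟩
          by_contra he
          exact hvH (hF1 t₂ ht₂H v hadj hvA he)
      have key : ∀ ea eb : Sym2 V, E = {ea, eb} → t₁ ∈ ea → False := by
        intro ea eb hE' ht₁a
        by_cases hta : t₂ ∈ ea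
        · have hea : ea = s(t₁, t₂) := by
            obtain ⟨p, q, rfl⟩ : ∃ p q, ea = s(p, q) := by
              induction ea using Sym2.ind with | _ p q => exact ⟨p, q, rfl⟩
            rcases Sym2.mem_iff.mp ht₁a with h1 | h1 <;>
              rcases Sym2.mem_iff.mp hta with h2 | h2
            · exact absurd (h1.trans h2.symm) h12
            · rw [h1, h2]
            · rw [h1, h2, Sym2.eq_swap]
            · exact absurd (h1.trans h2.symm) h12
          by_cases hw : ∃ w, s(t₂, w) = eb
          · obtain ⟨w, hwe⟩ := hw
            refine hdeg t₂ t₁ w ?_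
            intro v hadj
            rcases hNt₂ v hadj with h | ⟨hE'', -⟩
            · exact Or.inl h
            · rw [hE'] at hE''
              rcases hE'' with h | h
              · rw [hea] at h
                rcases Sym2.eq_iff.mp h with ⟨h1, -⟩ | ⟨-, h2⟩
                · exact absurd h1.symm h12
                · exact Or.inl h2
              · right
                have := h.trans hwe.symm
                rcases Sym2.eq_iff.mp this with ⟨-, h2⟩ | ⟨h1, h2⟩
                · exact h2
                · exact absurd (h2 ▸ hadj) (G.irrefl)
          · refine hdeg t₂ t₁ t₁ ?_
            intro v hadj
            rcases hNt₂ v hadj with h | ⟨hE'', -⟩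
            · exact Or.inl h
            · rw [hE'] at hE''
              rcases hE'' with h | h
              · rw [hea] at h
                rcases Sym2.eq_iff.mp h with ⟨h1, -⟩ | ⟨-, h2⟩
                · exact absurd h1.symm h12
                · exact Or.inl h2
              · exact absurd ⟨v, h⟩ hw
        · by_cases hw : ∃ w, s(t₂, w) = eb
          · obtain ⟨w, hwe⟩ := hw
            refine hdeg t₂ t₁ w ?_
            intro v hadj
            rcases hNt₂ v hadj with h | ⟨hE'', -⟩
            · exact Or.inl h
            · rw [hE'] at hE''
              rcases hE'' with h | h
              · exact absurd (h ▸ Sym2.mem_mk_left t₂ v) hta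
              · right
                have := h.trans hwe.symm
                rcases Sym2.eq_iff.mp this with ⟨-, h2⟩ | ⟨h1, h2⟩
                · exact h2
                · exact absurd (h2 ▸ hadj) (G.irrefl)
          · refine hdeg t₂ t₁ t₁ ?_
            intro v hadj
            rcases hNt₂ v hadj with h | ⟨hE'', -⟩
            · exact Or.inl h
            · rw [hE'] at hE''
              rcases hE'' with h | h
              · exact absurd (h ▸ Sym2.mem_mk_left t₂ v) hta
              · exact absurd ⟨v, h⟩ hw
      have hesor : es = e₁ ∨ es = e₂ := by
        rw [hEeq] at hesE
        simpa using hesE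
      rcases hesor with h | h
      · exact key e₁ e₂ hEeq (h ▸ ht₁es)
      · exact key e₂ e₁ (by rw [hEeq]; exact Set.pair_comm e₁ e₂) (h ▸ ht₁es)
  -- ===== Step 4 : the complemented cut =====
  refine ⟨hadjxy, Or.inr ⟨hyA, ?_⟩⟩
  intro hconn'
  have hu₂mem : u₂ ∈ ((A \ {y})ᶜ : Set V) := by
    simp only [Set.mem_compl_iff, Set.mem_diff, Set.mem_singleton_iff, not_and]
    intro h
    exact absurd h hu₂A
  have hymem : y ∈ ((A \ {y})ᶜ : Set V) := by simp
  have hr := hconn'.preconnected ⟨u₂, hu₂mem⟩ ⟨y, hymem⟩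
  have hyH₂' : y ∈ H₂ := by
    refine reach_closed (C := {p : ↥((A \ {y})ᶜ : Set V) | (p : V) ∈ H₂}) ?_ hr hu₂H₂
    rintro ⟨p, hp⟩ hpH ⟨q, hq⟩ hadj'
    obtain ⟨hGadj, hE'⟩ := (delveAdj (A \ {y}) (insert s(x, y) E) p q hp hq).mp hadj'
    by_cases hqH : q ∈ H₂
    · exact hqH
    by_cases hqA : q ∈ A
    · have hqy : q = y := by
        have hq' : q ∉ A \ {y} := by simpa using hq
        simp only [Set.mem_diff, Set.mem_singleton_iff, not_and, not_not] at hq'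
        exact hq' hqA
      have hpx : p = x := hNy p (hqy ▸ hGadj).symm hpH
      refine absurd ?_ hE'
      rw [hpx, hqy]
      exact Set.mem_insert _ _
    · exact absurd (hF1 p hpH q hGadj hqA (fun h => hE' (Set.mem_insert_of_mem _ h))) hqH
  exact hyH₂ hyH₂'

end Paper
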